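/- arXiv:0901.3189 — 2 statements merged into one kernel-verified Lean document; each statement's English description precedes it below -/
import Mathlib

section
/- Let p be a prime. For all j with 0 < j < p, b·M[p−1, j−1] + c·M[p−1, j] ≡ 0 (mod p). -/
/-- The matrix `M` from Definition 4.1: `M[0,0] = 1`, `M[0,j] = a^j` for `j > 0`,
`M[i,0] = c^i` for `i > 0`, and `M[i,j] = a*M[i,j-1] + b*M[i-1,j-1] + c*M[i-1,j]`
for `i, j > 0`. -/
def M (a b c : ℕ) : ℕ → ℕ → ℕ
  | 0, 0 => 1
  | 0, j + 1 => a ^ (j + 1)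
  | i + 1, 0 => c ^ (i + 1)
  | i + 1, j + 1 =>
      a * M a b c (i + 1) j + b * M a b c i j + c * M a b c i (j + 1)
  termination_by i j => i + j

open PowerSeries

private lemma M_zero_right (a b c : ℕ) (i : ℕ) : M a b c i 0 = c ^ i := by
  cases i with
  | zero => rw [M]; rfl
  | succ n => rw [M]

private lemma M_zero_left (a b c : ℕ) (j : ℕ) : M a b c 0 j = a ^ j := by
  cases j with
  | zero => rw [M]; rfl
  | succ n => rw [M]

private lemma M_rec (a b c i j : ℕ) :
    M a b c (i + 1) (j + 1)
      = a * M a b c (i + 1) j + b * M a b c i j + c * M a b c i (j + 1) := by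
  rw [M]

/-- Row generating function of `M` over `ZMod p`. -/
private noncomputable def F (p a b c : ℕ) (i : ℕ) : PowerSeries (ZMod p) :=
  PowerSeries.mk fun j => (M a b c i j : ZMod p)

private lemma step (p a b c : ℕ) (i : ℕ) :
    (1 - C (R := ZMod p) a * X) * F p a b c (i + 1)
      = (C (R := ZMod p) c + C (R := ZMod p) b * X) * F p a b c i := by
  have hL : (1 - C (R := ZMod p) a * X) * F p a b c (i + 1)
      = F p a b c (i + 1) - C (R := ZMod p) a * (X * F p a b c (i + 1)) := by ring
  have hR : (C (R := ZMod p) c + C (R := ZMod p) b * X) * F p a b c i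
      = C (R := ZMod p) c * F p a b c i + C (R := ZMod p) b * (X * F p a b c i) := by ring
  rw [hL, hR]
  ext j
  rw [map_sub, map_add, coeff_C_mul, coeff_C_mul, coeff_C_mul]
  cases j with
  | zero =>
    rw [coeff_zero_X_mul, coeff_zero_X_mul]
    simp only [F, coeff_mk, M_zero_right, mul_zero, sub_zero, add_zero]
    push_cast [pow_succ]
    ring
  | succ n =>
    rw [coeff_succ_X_mul, coeff_succ_X_mul]
    simp only [F, coeff_mk, M_rec]
    push_cast
    ring

private lemma base (p a b c : ℕ) :
    (1 - C (R := ZMod p) a * X) * F p a b c 0 = 1 := by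
  have hL : (1 - C (R := ZMod p) a * X) * F p a b c 0
      = F p a b c 0 - C (R := ZMod p) a * (X * F p a b c 0) := by ring
  rw [hL]
  ext j
  rw [map_sub, coeff_C_mul]
  cases j with
  | zero =>
    rw [coeff_zero_X_mul]
    simp [F, M_zero_left]
  | succ n =>
    rw [coeff_succ_X_mul]
    simp only [F, coeff_mk, M_zero_left, coeff_one, Nat.succ_ne_zero, if_false]
    push_cast [pow_succ]
    ring

private lemma pow_eq (p a b c : ℕ) (i : ℕ) :
    (1 - C (R := ZMod p) a * X) ^ (i + 1) * F p a b c i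
      = (C (R := ZMod p) c + C (R := ZMod p) b * X) ^ i := by
  induction i with
  | zero => simpa using base p a b c
  | succ n ih =>
    calc (1 - C (R := ZMod p) a * X) ^ (n + 2) * F p a b c (n + 1)
        = (1 - C (R := ZMod p) a * X) ^ (n + 1)
            * ((1 - C (R := ZMod p) a * X) * F p a b c (n + 1)) := by ring
      _ = (1 - C (R := ZMod p) a * X) ^ (n + 1)
            * ((C (R := ZMod p) c + C (R := ZMod p) b * X) * F p a b c n) := by rw [step]
      _ = (C (R := ZMod p) c + C (R := ZMod p) b * X)
            * ((1 - C (R := ZMod p) a * X) ^ (n + 1) * F p a b c n) := by ring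
      _ = _ := by rw [ih]; ring

/-- Lemma 4.11(b) (sum lemma): for `p` prime and `0 < j < p`,
`b·M[p-1, j-1] + c·M[p-1, j] ≡ 0` modulo `p`. -/
theorem M_sum_column (p a b c : ℕ) (hp : p.Prime) :
    ∀ j : ℕ, 0 < j → j < p →
      b * M a b c (p - 1) (j - 1) + c * M a b c (p - 1) j ≡ 0 [MOD p] := by
  haveI : Fact p.Prime := ⟨hp⟩
  haveI : CharP (PowerSeries (ZMod p)) p :=
    charP_of_injective_ringHom (PowerSeries.C_injective (R := ZMod p)) p
  intro j hj hjp
  set G := (C (R := ZMod p) c + C (R := ZMod p) b * X) * F p a b c (p - 1) with hG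
  have hkey : (1 - C (R := ZMod p) a * X ^ p) * G
      = C (R := ZMod p) c + C (R := ZMod p) b * X ^ p := by
    have h1 : (1 - C (R := ZMod p) a * X) ^ p * F p a b c (p - 1)
        = (C (R := ZMod p) c + C (R := ZMod p) b * X) ^ (p - 1) := by
      have := pow_eq p a b c (p - 1)
      rwa [Nat.sub_add_cancel hp.one_lt.le] at this
    have h2 : (1 - C (R := ZMod p) a * X) ^ p * G
        = (C (R := ZMod p) c + C (R := ZMod p) b * X) ^ p := by
      rw [show (C (R := ZMod p) c + C (R := ZMod p) b * X) ^ p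
          = (C (R := ZMod p) c + C (R := ZMod p) b * X)
            * ((C (R := ZMod p) c + C (R := ZMod p) b * X) ^ (p - 1)) by
        rw [← pow_succ', Nat.sub_add_cancel hp.one_lt.le]]
      rw [hG, ← h1]; ring
    have hfrobA : (1 - C (R := ZMod p) a * X) ^ p = 1 - C (R := ZMod p) a * X ^ p := by
      rw [sub_pow_char, one_pow, mul_pow, ← map_pow, ZMod.pow_card]
    have hfrobB : (C (R := ZMod p) c + C (R := ZMod p) b * X) ^ p
        = C (R := ZMod p) c + C (R := ZMod p) b * X ^ p := by
      rw [add_pow_char, ← map_pow, ZMod.pow_card, mul_pow, ← map_pow, ZMod.pow_card]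
    rw [← hfrobA, h2, hfrobB]
  have hXp : coeff (R := ZMod p) j (X ^ p * G) = 0 := by
    exact (PowerSeries.X_pow_dvd_iff.mp (dvd_mul_right _ _)) j hjp
  have hGj : coeff (R := ZMod p) j G = 0 := by
    have hexp : (1 - C (R := ZMod p) a * X ^ p) * G
        = G - C (R := ZMod p) a * (X ^ p * G) := by ring
    have h := congrArg (fun φ => coeff (R := ZMod p) j φ) hkey
    simp only [hexp, map_sub, map_add, coeff_C_mul, hXp, mul_zero, sub_zero,
      coeff_C, coeff_X_pow, hj.ne', hjp.ne, if_false] at h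
    rw [h]; ring
  obtain ⟨n, rfl⟩ : ∃ n, j = n + 1 := ⟨j - 1, (Nat.succ_pred_eq_of_pos hj).symm⟩
  have hexp2 : G = C (R := ZMod p) c * F p a b c (p - 1)
      + C (R := ZMod p) b * (X * F p a b c (p - 1)) := by rw [hG]; ring
  rw [hexp2] at hGj
  rw [map_add, coeff_C_mul, coeff_C_mul, coeff_succ_X_mul] at hGj
  simp only [F, coeff_mk] at hGj
  have h0 : ((b * M a b c (p - 1) (n + 1 - 1) + c * M a b c (p - 1) (n + 1) : ℕ) : ZMod p)
      = ((0 : ℕ) : ZMod p) := by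
    push_cast [Nat.add_sub_cancel]
    rw [add_comm]
    exact hGj
  exact (ZMod.natCast_eq_natCast_iff _ _ _).mp h0
end

section
/- Let p be a prime not dividing any of a, b, c, and let k ≥ 0. Then M[p^k − 1, p^k − 1] ≡ 1 (mod p). -/
open Finset

def fM (a b c i j t : ℕ) : ℕ :=
  i.choose t * j.choose t * a ^ (j - t) * c ^ (i - t) * (b + a * c) ^ t

lemma fM_zero_left {a b c i j t : ℕ} (h : i < t) : fM a b c i j t = 0 := by
  simp [fM, Nat.choose_eq_zero_of_lt h]

lemma fM_zero_right {a b c i j t : ℕ} (h : j < t) : fM a b c i j t = 0 := by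
  simp [fM, Nat.choose_eq_zero_of_lt h]

lemma sum_fM_ext {a b c : ℕ} {i j N : ℕ} (h : i < N) :
    ∑ t ∈ range N, fM a b c i j t = ∑ t ∈ range (i + 1), fM a b c i j t := by
  refine (Finset.sum_subset (Finset.range_subset_range.2 (by omega)) ?_).symm
  intro x hx hx'
  simp only [mem_range] at hx hx'
  exact fM_zero_left (by omega)

lemma sum_fM_ext' {a b c : ℕ} {i j N : ℕ} (h : j < N) :
    ∑ t ∈ range N, fM a b c i j t = ∑ t ∈ range (j + 1), fM a b c i j t := by
  refine (Finset.sum_subset (Finset.range_subset_range.2 (by omega)) ?_).symm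
  intro x hx hx'
  simp only [mem_range] at hx hx'
  exact fM_zero_right (by omega)

lemma fM_termwise (a b c i j t : ℕ) :
    fM a b c (i+1) (j+1) (t+1) + a * c * fM a b c i j (t+1)
      = a * fM a b c (i+1) j (t+1) + c * fM a b c i (j+1) (t+1)
        + (b + a * c) * fM a b c i j t := by
  simp only [fM, Nat.choose_succ_succ, Nat.succ_sub_succ]
  rcases lt_or_ge t j with hj | hj <;> rcases lt_or_ge t i with hi | hi
  · have hj' : j - t = (j - (t+1)) + 1 := by omega
    have hi' : i - t = (i - (t+1)) + 1 := by omega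
    rw [hj', hi', pow_succ (b + a*c) t]
    ring
  · have h1 : i.choose (t+1) = 0 := Nat.choose_eq_zero_of_lt (by omega)
    have hi' : i - t = 0 := by omega
    have hi'' : i - (t+1) = 0 := by omega
    have hj' : j - t = (j - (t+1)) + 1 := by omega
    rw [h1, hi', hi'', hj', pow_succ (b + a*c) t]
    ring
  · have h1 : j.choose (t+1) = 0 := Nat.choose_eq_zero_of_lt (by omega)
    have hj' : j - t = 0 := by omega
    have hj'' : j - (t+1) = 0 := by omega
    have hi' : i - t = (i - (t+1)) + 1 := by omega
    rw [h1, hj', hj'', hi', pow_succ (b + a*c) t]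
    ring
  · have h1 : j.choose (t+1) = 0 := Nat.choose_eq_zero_of_lt (by omega)
    have h2 : i.choose (t+1) = 0 := Nat.choose_eq_zero_of_lt (by omega)
    have hj' : j - t = 0 := by omega
    have hi' : i - t = 0 := by omega
    rw [h1, h2, hj', hi', pow_succ (b + a*c) t]
    ring

lemma key (a b c i j N : ℕ) :
    (∑ t ∈ range (N+1), fM a b c (i+1) (j+1) t)
      + a * c * ∑ t ∈ range (N+1), fM a b c i j t
    = a * (∑ t ∈ range (N+1), fM a b c (i+1) j t)
      + c * (∑ t ∈ range (N+1), fM a b c i (j+1) t)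
      + (b + a * c) * ∑ t ∈ range N, fM a b c i j t := by
  have h1 : (∑ t ∈ range N, fM a b c (i+1) (j+1) (t+1))
      + a * c * ∑ t ∈ range N, fM a b c i j (t+1)
    = a * (∑ t ∈ range N, fM a b c (i+1) j (t+1))
      + c * (∑ t ∈ range N, fM a b c i (j+1) (t+1))
      + (b + a * c) * ∑ t ∈ range N, fM a b c i j t := by
    simp only [Finset.mul_sum, ← Finset.sum_add_distrib]
    exact Finset.sum_congr rfl fun t _ => fM_termwise a b c i j t
  have h2 : fM a b c (i+1) (j+1) 0 + a * c * fM a b c i j 0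
      = a * fM a b c (i+1) j 0 + c * fM a b c i (j+1) 0 := by
    simp only [fM, Nat.choose_zero_right, Nat.sub_zero, pow_zero]
    ring
  rw [Finset.sum_range_succ' (fM a b c (i+1) (j+1)) N,
      Finset.sum_range_succ' (fM a b c i j) N,
      Finset.sum_range_succ' (fM a b c (i+1) j) N,
      Finset.sum_range_succ' (fM a b c i (j+1)) N]
  calc (∑ t ∈ range N, fM a b c (i+1) (j+1) (t+1) + fM a b c (i+1) (j+1) 0)
      + a * c * (∑ t ∈ range N, fM a b c i j (t+1) + fM a b c i j 0)
      = ((∑ t ∈ range N, fM a b c (i+1) (j+1) (t+1))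
          + a * c * ∑ t ∈ range N, fM a b c i j (t+1))
        + (fM a b c (i+1) (j+1) 0 + a * c * fM a b c i j 0) := by ring
    _ = (a * (∑ t ∈ range N, fM a b c (i+1) j (t+1))
          + c * (∑ t ∈ range N, fM a b c i (j+1) (t+1))
          + (b + a * c) * ∑ t ∈ range N, fM a b c i j t)
        + (a * fM a b c (i+1) j 0 + c * fM a b c i (j+1) 0) := by rw [h1, h2]
    _ = _ := by ring

theorem M_closed (a b c : ℕ) : ∀ i j, M a b c i j = ∑ t ∈ range (i + 1), fM a b c i j t := by
  intro i j
  induction i, j using M.induct with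
  | case1 => simp [M, fM]
  | case2 j => simp [M, fM]
  | case3 i =>
      rw [M, sum_fM_ext' (show 0 < i + 1 + 1 by omega)]
      simp [fM]
  | case4 i j h1 h2 h3 =>
      rw [M, h1, h2, h3]
      have hkey := key a b c i j (i + j + 1)
      rw [sum_fM_ext (show i + 1 < i + j + 1 + 1 by omega) (j := j + 1),
          sum_fM_ext (show i < i + j + 1 + 1 by omega) (j := j),
          sum_fM_ext (show i + 1 < i + j + 1 + 1 by omega) (j := j),
          sum_fM_ext (show i < i + j + 1 + 1 by omega) (j := j + 1),
          sum_fM_ext (show i < i + j + 1 by omega) (j := j)] at hkey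
      have h4 : (∑ t ∈ range (i + 1 + 1), fM a b c (i+1) (j+1) t)
            + a * c * ∑ t ∈ range (i + 1), fM a b c i j t
          = (a * (∑ t ∈ range (i + 1 + 1), fM a b c (i+1) j t)
              + b * (∑ t ∈ range (i + 1), fM a b c i j t)
              + c * ∑ t ∈ range (i + 1), fM a b c i (j+1) t)
            + a * c * ∑ t ∈ range (i + 1), fM a b c i j t := by
        rw [hkey]; ring
      exact (Nat.add_right_cancel h4).symm

lemma choose_p_sub_one (p : ℕ) [Fact p.Prime] : ∀ {r : ℕ}, r ≤ p - 1 →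
    (((p-1).choose r : ℕ) : ZMod p) = (-1) ^ r := by
  intro r
  induction r with
  | zero => simp
  | succ r ih =>
    intro hr
    have hp : 2 ≤ p := (Fact.out : p.Prime).two_le
    have h := Nat.choose_succ_right_eq (p-1) r
    have hcast : (((p-1).choose (r+1) * (r+1) : ℕ) : ZMod p)
        = (((p-1).choose r * (p-1-r) : ℕ) : ZMod p) := by rw [h]
    push_cast at hcast
    have hsub : ((p - 1 - r : ℕ) : ZMod p) = -((r : ZMod p)+1) := by
      have h2 : (p - 1 - r) + (r + 1) = p := by omega
      have h3 := congrArg (fun m : ℕ => (m : ZMod p)) h2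
      push_cast at h3
      rw [ZMod.natCast_self] at h3
      linear_combination h3
    rw [ih (by omega), hsub] at hcast
    have hne : ((r : ZMod p)+1) ≠ 0 := by
      have : (((r+1 : ℕ)) : ZMod p) ≠ 0 := by
        rw [Ne, ZMod.natCast_eq_zero_iff]
        intro hdvd
        have := Nat.le_of_dvd (by omega) hdvd
        omega
      push_cast at this
      exact this
    refine mul_right_cancel₀ hne ?_
    rw [hcast]
    ring

lemma choose_pow_sub_one (p : ℕ) [Fact p.Prime] : ∀ (k t : ℕ), t ≤ p^k - 1 →
    (((p^k - 1).choose t : ℕ) : ZMod p) = (-1) ^ t := by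
  intro k
  have hp : 2 ≤ p := (Fact.out : p.Prime).two_le
  induction k with
  | zero =>
    intro t ht
    rw [pow_zero] at ht
    have ht0 : t = 0 := by omega
    subst ht0
    simp
  | succ k ih =>
    intro t ht
    have hq : 1 ≤ p ^ k := Nat.one_le_pow _ _ (by omega)
    have hpow : p ^ (k+1) = p * p ^ k := by rw [pow_succ, mul_comm]
    have he : p * (p ^ k - 1) = p * p ^ k - p := by rw [Nat.mul_sub, mul_one]
    have hple : p ≤ p * p ^ k := Nat.le_mul_of_pos_right p hq
    have h1 : p ^ (k+1) - 1 = p * (p ^ k - 1) + (p - 1) := by omega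
    have hmod : (p ^ (k+1) - 1) % p = p - 1 := by
      rw [h1, Nat.mul_add_mod, Nat.mod_eq_of_lt (by omega)]
    have hdiv : (p ^ (k+1) - 1) / p = p ^ k - 1 := by
      rw [h1, Nat.mul_add_div (by omega), Nat.div_eq_of_lt (by omega), Nat.add_zero]
    have lucas := Choose.choose_modEq_choose_mod_mul_choose_div (p := p)
      (n := p ^ (k+1) - 1) (k := t)
    have heq := (ZMod.intCast_eq_intCast_iff _ _ _).mpr lucas
    push_cast at heq
    rw [hmod, hdiv] at heq
    have htp : t % p ≤ p - 1 := by
      have := Nat.mod_lt t (show 0 < p by omega)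
      omega
    have htd : t / p ≤ p ^ k - 1 := by
      have h2 : t / p < p ^ k := by
        rw [Nat.div_lt_iff_lt_mul (by omega)]
        calc t ≤ p ^ (k+1) - 1 := ht
          _ < p ^ k * p := by rw [← pow_succ]; omega
      omega
    rw [heq, choose_p_sub_one p htp, ih (t / p) htd]
    conv_rhs => rw [← Nat.div_add_mod t p]
    rw [pow_add, pow_mul, ZMod.pow_card (-1 : ZMod p)]
    ring


/-- Part (c) of the induction in the proof of Theorem 4.4: for `p` prime not dividing
`a`, `b`, or `c`, and any `k ≥ 0`, `M[p^k - 1, p^k - 1] ≡ 1 (mod p)`. -/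
theorem M_diag_corner (p a b c : ℕ) (hp : p.Prime)
    (ha : ¬ p ∣ a) (hb : ¬ p ∣ b) (hc : ¬ p ∣ c) (k : ℕ) :
    M a b c (p ^ k - 1) (p ^ k - 1) ≡ 1 [MOD p] := by
  haveI := Fact.mk hp
  have hp2 : 2 ≤ p := hp.two_le
  have hpk : 1 ≤ p ^ k := Nat.one_le_pow _ _ (by omega)
  set n := p ^ k - 1 with hn
  apply (ZMod.natCast_eq_natCast_iff _ _ _).mp
  rw [M_closed, Nat.cast_sum, Nat.cast_one]
  have hsum : ∀ t ∈ range (n+1),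
      ((fM a b c n n t : ℕ) : ZMod p)
        = ((b : ZMod p) + (a : ZMod p) * c) ^ t * ((a : ZMod p) * c) ^ (n - t) := by
    intro t htm
    simp only [mem_range] at htm
    simp only [fM]
    push_cast
    rw [choose_pow_sub_one p k t (by omega)]
    have h11 : ((-1 : ZMod p))^t * (-1)^t = 1 := by
      rw [← mul_pow]; norm_num
    rw [h11, one_mul, mul_pow]
    ring
  rw [Finset.sum_congr rfl hsum]
  have hgeom := geom_sum₂_mul ((b : ZMod p) + (a : ZMod p) * c) ((a : ZMod p) * c) (n+1)
  simp only [Nat.add_sub_cancel] at hgeom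
  rw [add_sub_cancel_right] at hgeom
  have hnp : n + 1 = p ^ k := by omega
  rw [hnp] at hgeom ⊢
  rw [add_pow_char_pow, add_sub_cancel_right, ZMod.pow_card_pow] at hgeom
  have hb' : (b : ZMod p) ≠ 0 := by
    rw [Ne, ZMod.natCast_eq_zero_iff]
    exact hb
  exact mul_right_cancel₀ hb' (by rw [hgeom, one_mul])
end
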